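/- Let M be a generic Artinian monomial ideal in C[z_1,...,z_n] with staircase S, let σ be a permutation of {1,...,n}, and let α be an outer corner of S whose Scarf simplex is I = {i_1,...,i_n} with x_ℓ-vertex i_{η(ℓ)}. Set τ = η ∘ σ. Then S_{σ,α} is the half-open cuboid with σ(k)-th side ]( a^{i_{τ(1)}} ∨ ··· ∨ a^{i_{τ(k-1)}} )_{σ(k)}, ( a^{i_{τ(1)}} ∨ ··· ∨ a^{i_{τ(k)}} )_{σ(k)}] for k = 1,...,n (with empty join interpreted as 0). In particular Vol(S_{σ,α}) = ∏_{k=1}^n ( a^{i_{τ(1)}} ∨ ··· ∨ a^{i_{τ(k)}} − a^{i_{τ(1)}} ∨ ··· ∨ a^{i_{τ(k-1)}} )_{σ(k)}. -/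

import Mathlib

open MvPolynomial MeasureTheory

def lcmOf {n r : ℕ} (a : Fin r → Fin n → ℕ) (I : Finset (Fin r)) : Fin n → ℕ :=
  fun j => I.sup fun i => a i j

def Scarf {n r : ℕ} (a : Fin r → Fin n → ℕ) : Set (Finset (Fin r)) :=
  {I | ∀ J : Finset (Fin r), lcmOf a J = lcmOf a I → J = I}

def StrictlyDivides {n : ℕ} (b c : Fin n → ℕ) : Prop :=
  ∀ ℓ, b ℓ ≤ c ℓ ∧ (0 < c ℓ → b ℓ < c ℓ)

def Generic {n : ℕ} {ι : Type*} (a : ι → Fin n → ℕ) : Prop :=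
  ∀ i j, i ≠ j → (∃ ℓ, 0 < a i ℓ ∧ a i ℓ = a j ℓ) →
    ∃ k, StrictlyDivides (a k) (a i ⊔ a j)

def ArtinianGens {n : ℕ} {ι : Type*} (a : ι → Fin n → ℕ) : Prop :=
  ∀ ℓ : Fin n, ∃ i, ∀ m, m ≠ ℓ → a i m = 0

def MinimalGens {n : ℕ} {ι : Type*} (a : ι → Fin n → ℕ) : Prop :=
  ∀ i j, a i ≤ a j → i = j

def genStaircase {n r : ℕ} (a : Fin r → Fin n → ℕ) : Set (Fin n → ℝ) :=
  {x | (∀ j, 0 < x j) ∧ ∀ i, ∃ j, x j ≤ (a i j : ℝ)}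

def outerCorners {n : ℕ} (S : Set (Fin n → ℝ)) : Set (Fin n → ℝ) :=
  {α | α ∈ S ∧ ∀ x ∈ S, α ≤ x → x = α}

def lexGT {n : ℕ} (σ : Equiv.Perm (Fin n)) (α β : Fin n → ℝ) : Prop :=
  ∃ k, (∀ ℓ < k, α (σ ℓ) = β (σ ℓ)) ∧ β (σ k) < α (σ k)

def piece {n : ℕ} (S : Set (Fin n → ℝ)) (σ : Equiv.Perm (Fin n)) (α : Fin n → ℝ) :
    Set (Fin n → ℝ) :=
  {x | x ∈ S ∧ x ≤ α ∧ ∀ β ∈ outerCorners S, lexGT σ β α → ¬ x ≤ β}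

noncomputable def monIdeal {n : ℕ} (B : Set (Fin n → ℕ)) : Ideal (MvPolynomial (Fin n) ℂ) :=
  Ideal.span ((fun b => monomial (Finsupp.equivFunOnFinite.symm b) (1:ℂ)) '' B)

def IsMonomialIdeal {n : ℕ} (M : Ideal (MvPolynomial (Fin n) ℂ)) : Prop :=
  ∃ B, M = monIdeal B

def staircaseI {n : ℕ} (M : Ideal (MvPolynomial (Fin n) ℂ)) : Set (Fin n → ℝ) :=
  {x | (∀ i, 0 < x i) ∧
    monomial (Finsupp.equivFunOnFinite.symm fun i => ⌈x i⌉₊ - 1) (1:ℂ) ∉ M}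


section AuxLemmas

variable {n r : ℕ} {a : Fin r → Fin n → ℕ} {I : Finset (Fin r)}
  {v : Fin n → Fin r} {η : Equiv.Perm (Fin n)}

lemma aux_surj (hv1 : Function.Injective v) (hv2 : ∀ ℓ, v ℓ ∈ I) (hcard : I.card = n) :
    ∀ i ∈ I, ∃ ℓ, v ℓ = i := by
  classical
  have himg : Finset.image v Finset.univ = I := by
    apply Finset.eq_of_subset_of_card_le
    · intro i hi
      obtain ⟨ℓ, _, rfl⟩ := Finset.mem_image.mp hi
      exact hv2 ℓ
    · rw [Finset.card_image_of_injective _ hv1, Finset.card_univ, Fintype.card_fin, hcard]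
  intro i hi
  rw [← himg] at hi
  obtain ⟨ℓ, _, hℓ⟩ := Finset.mem_image.mp hi
  exact ⟨ℓ, hℓ⟩

lemma aux_le (hi : ∀ ℓ, v ℓ ∈ I) (ℓ : Fin n) (j : Fin n) :
    a (v ℓ) j ≤ lcmOf a I j :=
  Finset.le_sup (f := fun i => a i j) (hi ℓ)

lemma aux_mem_le {i : Fin r} (hi : i ∈ I) (j : Fin n) : a i j ≤ lcmOf a I j :=
  Finset.le_sup (f := fun i => a i j) hi

lemma aux_claimA (hI : I ∈ Scarf a) (hv1 : Function.Injective v)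
    (hv2 : ∀ ℓ, v ℓ ∈ I) (hcard : I.card = n)
    (hη : ∀ ℓ, a (v (η ℓ)) ℓ = lcmOf a I ℓ) :
    ∀ i, ∃ j, lcmOf a I j ≤ a i j := by
  classical
  intro i
  by_contra h
  push_neg at h
  have hins : lcmOf a (insert i I) = lcmOf a I := by
    funext j
    show (insert i I).sup (fun i => a i j) = I.sup (fun i => a i j)
    rw [Finset.sup_insert]
    exact sup_eq_right.mpr (le_of_lt (h j))
  have hiI : i ∈ I := by
    have := hI _ hins
    rw [← this]
    exact Finset.mem_insert_self i I
  obtain ⟨ℓ0, hℓ0⟩ := aux_surj hv1 hv2 hcard i hiI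
  have := hη (η.symm ℓ0)
  rw [Equiv.apply_symm_apply, hℓ0] at this
  exact absurd this (ne_of_lt (h _))

lemma aux_claimB (hI : I ∈ Scarf a) (hv1 : Function.Injective v)
    (hv2 : ∀ ℓ, v ℓ ∈ I)
    (hη : ∀ ℓ, a (v (η ℓ)) ℓ = lcmOf a I ℓ) :
    ∀ j, 0 < lcmOf a I j := by
  classical
  intro j
  by_contra h
  push_neg at h
  have hz : lcmOf a I j = 0 := Nat.le_zero.mp h
  set W : Fin n → Fin r := fun ℓ => v (η ℓ) with hW
  have hWinj : Function.Injective W := hv1.comp η.injective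
  have hlcm : lcmOf a (I.erase (W j)) = lcmOf a I := by
    funext ℓ
    refine le_antisymm ?_ ?_
    · exact Finset.sup_mono (Finset.erase_subset _ _)
    · by_cases hℓ : ℓ = j
      · subst hℓ; rw [hz]; exact Nat.zero_le _
      · have hmem : W ℓ ∈ I.erase (W j) :=
          Finset.mem_erase.mpr ⟨fun hc => hℓ (hWinj hc), hv2 _⟩
        calc lcmOf a I ℓ = a (W ℓ) ℓ := (hη ℓ).symm
          _ ≤ (I.erase (W j)).sup (fun i => a i ℓ) := Finset.le_sup (f := fun i => a i ℓ) hmem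
  have heq := hI _ hlcm
  have : W j ∈ I.erase (W j) := heq.symm ▸ hv2 (η j)
  exact absurd this (Finset.notMem_erase _ _)

lemma aux_gen (hgen : Generic a)
    (hA : ∀ i, ∃ j, lcmOf a I j ≤ a i j)
    (hB : ∀ j, 0 < lcmOf a I j) {g g' : Fin r} (hne : g ≠ g')
    (hg : ∀ j, a g j ≤ lcmOf a I j) (hg' : ∀ j, a g' j ≤ lcmOf a I j)
    {ℓ : Fin n} (hpos : 0 < a g ℓ) (heq : a g ℓ = a g' ℓ) : False := by
  obtain ⟨m, hm⟩ := hgen g g' hne ⟨ℓ, hpos, heq⟩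
  obtain ⟨j, hj⟩ := hA m
  have hsup : (a g ⊔ a g') j ≤ lcmOf a I j := by
    rw [Pi.sup_apply]
    exact sup_le (hg j) (hg' j)
  have h1 : a m j ≤ (a g ⊔ a g') j := (hm j).1
  have hposj : 0 < (a g ⊔ a g') j := lt_of_lt_of_le (hB j) (le_trans hj h1)
  have h2 : a m j < (a g ⊔ a g') j := (hm j).2 hposj
  omega


lemma aux_memS (hA : ∀ i, ∃ j, lcmOf a I j ≤ a i j) (x : Fin n → ℝ)
    (hpos : ∀ j, 0 < x j) (hle : ∀ j, x j ≤ (lcmOf a I j : ℝ)) :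
    x ∈ genStaircase a := by
  refine ⟨hpos, fun i => ?_⟩
  obtain ⟨j, hj⟩ := hA i
  exact ⟨j, le_trans (hle j) (Nat.cast_le.mpr hj)⟩

lemma aux_ceil {x : Fin n → ℝ} (hx : x ∈ genStaircase a) :
    (fun j => ((⌈x j⌉₊ : ℕ) : ℝ)) ∈ genStaircase a := by
  refine ⟨fun j => ?_, fun i => ?_⟩
  · exact lt_of_lt_of_le (hx.1 j) (Nat.le_ceil _)
  · obtain ⟨j, hj⟩ := hx.2 i
    exact ⟨j, Nat.cast_le.mpr (Nat.ceil_le.mpr hj)⟩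

lemma aux_bound (hart : ArtinianGens a) :
    ∃ d : Fin n → ℕ, ∀ x ∈ genStaircase a, ∀ ℓ, x ℓ ≤ (d ℓ : ℝ) := by
  classical
  choose ia hia using hart
  refine ⟨fun ℓ => a (ia ℓ) ℓ, fun x hx ℓ => ?_⟩
  obtain ⟨j, hj⟩ := hx.2 (ia ℓ)
  by_cases hjℓ : j = ℓ
  · subst hjℓ; exact hj
  · rw [hia ℓ j hjℓ] at hj
    exact absurd hj (not_le.mpr (by exact_mod_cast hx.1 j))

lemma aux_corner (hart : ArtinianGens a) {y : Fin n → ℝ} (hy : y ∈ genStaircase a) :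
    ∃ β ∈ outerCorners (genStaircase a), y ≤ β := by
  classical
  obtain ⟨d, hd⟩ := aux_bound hart
  set T : Set (Fin n → ℕ) :=
    {c | (fun j => ((c j : ℕ) : ℝ)) ∈ genStaircase a ∧ y ≤ fun j => ((c j : ℕ) : ℝ)} with hT
  have hTfin : T.Finite := by
    apply Set.Finite.subset (Set.Finite.pi (t := fun ℓ => Set.Iic (d ℓ))
      (fun ℓ => Set.finite_Iic _))
    intro c hc ℓ _
    have := hd _ hc.1 ℓ
    exact_mod_cast this
  have hTne : T.Nonempty := by
    refine ⟨fun j => ⌈y j⌉₊, aux_ceil hy, fun j => Nat.le_ceil _⟩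
  obtain ⟨c, hcT, hmax⟩ := Set.Finite.exists_maximalFor (fun c => ∑ j, c j) T hTfin hTne
  refine ⟨fun j => ((c j : ℕ) : ℝ), ⟨hcT.1, fun χ hχ hle => ?_⟩, hcT.2⟩
  by_contra hne
  have hstrict : ∃ j, ((c j : ℕ) : ℝ) < χ j := by
    by_contra hno
    push_neg at hno
    exact hne (le_antisymm hno hle)
  obtain ⟨j0, hj0⟩ := hstrict
  have hc'T : (fun j => ⌈χ j⌉₊) ∈ T := by
    refine ⟨aux_ceil hχ, fun j => le_trans (le_trans (hcT.2 j) (hle j)) (Nat.le_ceil _)⟩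
  have hle' : ∀ j, c j ≤ ⌈χ j⌉₊ := by
    intro j
    have : ((c j : ℕ) : ℝ) ≤ ((⌈χ j⌉₊ : ℕ) : ℝ) := le_trans (hle j) (Nat.le_ceil _)
    exact_mod_cast this
  have hlt : c j0 < ⌈χ j0⌉₊ := Nat.lt_ceil.mpr hj0
  have hsum : ∑ j, c j < ∑ j, ⌈χ j⌉₊ :=
    Finset.sum_lt_sum (fun i _ => hle' i) ⟨j0, Finset.mem_univ _, hlt⟩
  have : ∑ j, ⌈χ j⌉₊ ≤ ∑ j, c j := hmax hc'T (le_of_lt hsum)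
  omega

end AuxLemmas

/-- for a generic Artinian monomial ideal, a permutation `σ` and an
outer corner `α = lcm(I)` of a top Scarf simplex `I` with vertex enumeration `v`
and `x_ℓ`-vertex permutation `η`, the piece `S_{σ,α}` is the half-open cuboid
whose `σ(k)`-th side is
`]( a^{i_{τ(1)}} ∨ ⋯ ∨ a^{i_{τ(k-1)}} )_{σ(k)}, ( a^{i_{τ(1)}} ∨ ⋯ ∨ a^{i_{τ(k)}} )_{σ(k)}]`
with `τ = η ∘ σ`; in particular its volume is the product of the side lengths. -/
theorem stmt13 {n r : ℕ} (a : Fin r → Fin n → ℕ)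
    (hgen : Generic a) (hart : ArtinianGens a) (hminimal : MinimalGens a)
    (σ : Equiv.Perm (Fin n))
    (I : Finset (Fin r)) (hI : I ∈ Scarf a) (hcard : I.card = n)
    (v : Fin n → Fin r) (hv1 : Function.Injective v) (hv2 : ∀ ℓ, v ℓ ∈ I)
    (η : Equiv.Perm (Fin n)) (hη : ∀ ℓ, a (v (η ℓ)) ℓ = lcmOf a I ℓ) :
    piece (genStaircase a) σ (fun j => (lcmOf a I j : ℝ)) =
        {x : Fin n → ℝ | ∀ k : Fin n,
          ((((Finset.Iio k).sup fun j => a (v (η (σ j)))) (σ k) : ℝ) < x (σ k) ∧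
            x (σ k) ≤ (((Finset.Iic k).sup fun j => a (v (η (σ j)))) (σ k) : ℝ))} ∧
      volume (piece (genStaircase a) σ (fun j => (lcmOf a I j : ℝ))) =
        (↑(∏ k : Fin n,
          (((Finset.Iic k).sup fun j => a (v (η (σ j)))) (σ k) -
            ((Finset.Iio k).sup fun j => a (v (η (σ j)))) (σ k))) : ENNReal) := by
  classical
  have hA := aux_claimA hI hv1 hv2 hcard hη
  have hB := aux_claimB hI hv1 hv2 hη
  set M : Fin n → ℕ := fun k => (Finset.Iio k).sup (fun j => a (v (η (σ j))) (σ k)) with hMdef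
  set C : Fin n → ℕ := fun k => (Finset.Iic k).sup (fun j => a (v (η (σ j))) (σ k)) with hCdef
  have happM : ∀ k, ((Finset.Iio k).sup fun j => a (v (η (σ j)))) (σ k) = M k :=
    fun k => Finset.sup_apply _ _ _
  have happC : ∀ k, ((Finset.Iic k).sup fun j => a (v (η (σ j)))) (σ k) = C k :=
    fun k => Finset.sup_apply _ _ _
  have hCa : ∀ k, C k = lcmOf a I (σ k) := by
    intro k
    refine le_antisymm ?_ ?_
    · exact Finset.sup_le fun j _ => aux_le hv2 (η (σ j)) (σ k)
    · rw [← hη (σ k)]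
      exact Finset.le_sup (f := fun j => a (v (η (σ j))) (σ k)) (Finset.mem_Iic.mpr le_rfl)
  have hMle : ∀ k, M k ≤ lcmOf a I (σ k) :=
    fun k => Finset.sup_le fun j _ => aux_le hv2 (η (σ j)) (σ k)
  -- the key set identity
  have key : piece (genStaircase a) σ (fun j => (lcmOf a I j : ℝ)) =
      {x : Fin n → ℝ | ∀ k, (M k : ℝ) < x (σ k) ∧ x (σ k) ≤ (lcmOf a I (σ k) : ℝ)} := by
    apply Set.Subset.antisymm
    · -- piece ⊆ cuboid
      rintro x ⟨hxS, hxle, hxcor⟩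
      intro k
      refine ⟨?_, hxle (σ k)⟩
      by_contra hcon
      push_neg at hcon
      rcases Finset.eq_empty_or_nonempty (Finset.Iio k) with hemp | hne
      · have : M k = 0 := by rw [hMdef]; simp [hemp]
        rw [this] at hcon
        exact absurd hcon (not_le.mpr (by exact_mod_cast hxS.1 (σ k)))
      · obtain ⟨j, hjmem, hjsup⟩ :=
          Finset.exists_mem_eq_sup _ hne (fun j => a (v (η (σ j))) (σ k))
        have hjk : j < k := Finset.mem_Iio.mp hjmem
        -- x (σ k) ≤ a (v (η (σ j))) (σ k)
        have hxk : x (σ k) ≤ (a (v (η (σ j))) (σ k) : ℝ) := by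
          rw [← hjsup]; exact hcon
        -- build the auxiliary point w
        set w : Fin n → ℝ := fun jj => if σ.symm jj < j then (lcmOf a I jj : ℝ) else x jj
          with hwdef
        have hweq1 : ∀ ℓ, ℓ < j → w (σ ℓ) = (lcmOf a I (σ ℓ) : ℝ) := by
          intro ℓ hℓ; simp only [hwdef, Equiv.symm_apply_apply, if_pos hℓ]
        have hweq2 : ∀ ℓ, ¬ ℓ < j → w (σ ℓ) = x (σ ℓ) := by
          intro ℓ hℓ; simp only [hwdef, Equiv.symm_apply_apply, if_neg hℓ]
        have hwpos : ∀ jj, 0 < w jj := by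
          intro jj; rw [hwdef]
          by_cases h : σ.symm jj < j
          · simp only [if_pos h]; exact_mod_cast hB jj
          · simp only [if_neg h]; exact hxS.1 jj
        have hwle : ∀ jj, w jj ≤ (lcmOf a I jj : ℝ) := by
          intro jj; rw [hwdef]
          by_cases h : σ.symm jj < j
          · simp only [if_pos h]; exact le_rfl
          · simp only [if_neg h]; exact hxle jj
        have hwS : w ∈ genStaircase a := aux_memS hA w hwpos hwle
        have hxw : x ≤ w := by
          intro jj; rw [hwdef]
          by_cases h : σ.symm jj < j
          · simp only [if_pos h]; exact hxle jj
          · simp only [if_neg h]; exact le_rfl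
        -- the blockers
        set Bf : Finset (Fin r) :=
          Finset.univ.filter (fun i => ∀ ℓ, ℓ ≠ σ j → (a i ℓ : ℝ) < w ℓ) with hBf
        have hBne : Bf.Nonempty := by
          obtain ⟨i0, hi0⟩ := hart (σ j)
          refine ⟨i0, Finset.mem_filter.mpr ⟨Finset.mem_univ _, fun ℓ hℓ => ?_⟩⟩
          rw [hi0 ℓ hℓ]; exact_mod_cast hwpos ℓ
        set T : ℕ := Bf.inf' hBne (fun i => a i (σ j)) with hTdef
        obtain ⟨istar, histar, hieq⟩ := Finset.exists_mem_eq_inf' hBne (fun i => a i (σ j))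
        have histB : ∀ ℓ, ℓ ≠ σ j → (a istar ℓ : ℝ) < w ℓ :=
          (Finset.mem_filter.mp histar).2
        have hwj : w (σ j) = x (σ j) := hweq2 j (lt_irrefl j)
        have hxT : x (σ j) ≤ (T : ℝ) := by
          obtain ⟨jj, hjj⟩ := hwS.2 istar
          by_cases h : jj = σ j
          · subst h; rw [hwj] at hjj; rw [hTdef, hieq]; exact hjj
          · exact absurd hjj (not_le.mpr (histB jj h))
        set w' : Fin n → ℝ := Function.update w (σ j) (T : ℝ) with hw'def
        have hw'S : w' ∈ genStaircase a := by
          constructor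
          · intro jj
            by_cases h : jj = σ j
            · subst h; rw [hw'def, Function.update_self]
              exact lt_of_lt_of_le (hxS.1 (σ j)) hxT
            · rw [hw'def, Function.update_of_ne h]; exact hwpos jj
          · intro i
            by_cases hiB : i ∈ Bf
            · refine ⟨σ j, ?_⟩
              rw [hw'def, Function.update_self]
              exact_mod_cast Finset.inf'_le (fun i => a i (σ j)) hiB
            · rw [hBf, Finset.mem_filter] at hiB
              push_neg at hiB
              obtain ⟨ℓ, hℓne, hℓge⟩ := hiB (Finset.mem_univ i)
              exact ⟨ℓ, by rw [hw'def, Function.update_of_ne hℓne]; exact hℓge⟩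
        have hxw' : x ≤ w' := by
          intro jj
          by_cases h : jj = σ j
          · subst h; rw [hw'def, Function.update_self]; exact hxT
          · rw [hw'def, Function.update_of_ne h]; exact hxw jj
        -- trichotomy on T vs α (σ j)
        rcases lt_trichotomy T (lcmOf a I (σ j)) with hlt | heqT | hgt
        · -- blocker strictly below α everywhere: contradicts claim A
          obtain ⟨j0, hj0⟩ := hA istar
          by_cases h : j0 = σ j
          · subst h
            rw [← hieq, ← hTdef] at hj0
            exact absurd hj0 (not_le.mpr hlt)
          · have h1 : (a istar j0 : ℝ) < w j0 := histB j0 h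
            have h2 : w j0 ≤ (lcmOf a I j0 : ℝ) := hwle j0
            have : (a istar j0 : ℝ) < (lcmOf a I j0 : ℝ) := lt_of_lt_of_le h1 h2
            exact absurd hj0 (not_le.mpr (by exact_mod_cast this))
        · -- genericity contradiction between istar and g' = v (η (σ j))
          have histj : a istar (σ j) = lcmOf a I (σ j) := by rw [← hieq, ← hTdef]; exact heqT
          have hg'j : a (v (η (σ j))) (σ j) = lcmOf a I (σ j) := hη (σ j)
          have hne2 : istar ≠ v (η (σ j)) := by
            intro h
            have hkj : ¬ k < j := not_lt.mpr (le_of_lt hjk)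
            have h1 : (a istar (σ k) : ℝ) < w (σ k) := by
              refine histB (σ k) (fun hc => ?_)
              exact absurd (σ.injective hc) hjk.ne'
            rw [hweq2 k hkj] at h1
            have h2 : (a istar (σ k) : ℝ) < (a (v (η (σ j))) (σ k) : ℝ) :=
              lt_of_lt_of_le h1 hxk
            rw [h] at h2
            exact lt_irrefl _ h2
          have histle : ∀ jj, a istar jj ≤ lcmOf a I jj := by
            intro jj
            by_cases h : jj = σ j
            · subst h; exact le_of_eq histj
            · have h1 : (a istar jj : ℝ) < w jj := histB jj h
              have : (a istar jj : ℝ) < (lcmOf a I jj : ℝ) := lt_of_lt_of_le h1 (hwle jj)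
              exact le_of_lt (by exact_mod_cast this)
          have hg'le : ∀ jj, a (v (η (σ j))) jj ≤ lcmOf a I jj :=
            fun jj => aux_le hv2 (η (σ j)) jj
          have hpos : 0 < a istar (σ j) := by rw [histj]; exact hB (σ j)
          exact aux_gen hgen hA hB hne2 histle hg'le hpos (by rw [histj, hg'j])
        · -- T > α (σ j): produce a lex-greater outer corner above x
          obtain ⟨γ, hγc, hγge⟩ := aux_corner hart hw'S
          set Q : Finset (Fin n) :=
            Finset.univ.filter (fun ℓ => γ (σ ℓ) ≠ (lcmOf a I (σ ℓ) : ℝ)) with hQdef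
          have hw'j : w' (σ j) = (T : ℝ) := by rw [hw'def, Function.update_self]
          have hγj : (lcmOf a I (σ j) : ℝ) < γ (σ j) := by
            calc (lcmOf a I (σ j) : ℝ) < (T : ℝ) := by exact_mod_cast hgt
              _ = w' (σ j) := hw'j.symm
              _ ≤ γ (σ j) := hγge (σ j)
          have hjQ : j ∈ Q := by
            rw [hQdef, Finset.mem_filter]
            exact ⟨Finset.mem_univ _, ne_of_gt hγj⟩
          have hQne : Q.Nonempty := ⟨j, hjQ⟩
          set p : Fin n := Q.min' hQne with hpdef
          have hpQ : p ∈ Q := Finset.min'_mem _ _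
          have hpne : γ (σ p) ≠ (lcmOf a I (σ p) : ℝ) := by
            rw [hQdef, Finset.mem_filter] at hpQ; exact hpQ.2
          have hpj : p ≤ j := Finset.min'_le _ _ hjQ
          have h1 : ∀ ℓ, ℓ < p → γ (σ ℓ) = (lcmOf a I (σ ℓ) : ℝ) := by
            intro ℓ hℓ
            by_contra hc
            have : ℓ ∈ Q := by rw [hQdef, Finset.mem_filter]; exact ⟨Finset.mem_univ _, hc⟩
            exact absurd (Finset.min'_le _ _ this) (not_le.mpr hℓ)
          have hgtp : (lcmOf a I (σ p) : ℝ) < γ (σ p) := by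
            rcases lt_or_eq_of_le hpj with hplt | hpeq
            · have hσne : σ p ≠ σ j := fun hc => (ne_of_lt hplt) (σ.injective hc)
              have : w' (σ p) = (lcmOf a I (σ p) : ℝ) := by
                rw [hw'def, Function.update_of_ne hσne]; exact hweq1 p hplt
              have hge : (lcmOf a I (σ p) : ℝ) ≤ γ (σ p) := this ▸ hγge (σ p)
              exact lt_of_le_of_ne hge (Ne.symm hpne)
            · subst hpeq; exact hγj
          have hlex : lexGT σ γ (fun jj => (lcmOf a I jj : ℝ)) := ⟨p, fun ℓ hℓ => (h1 ℓ hℓ), hgtp⟩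
          exact hxcor γ hγc hlex (fun jj => le_trans (hxw' jj) (hγge jj))
    · -- cuboid ⊆ piece
      intro x hx
      have hxup : ∀ jj, x jj ≤ (lcmOf a I jj : ℝ) := by
        intro jj
        have := (hx (σ.symm jj)).2
        rwa [Equiv.apply_symm_apply] at this
      have hxpos : ∀ jj, 0 < x jj := by
        intro jj
        have := (hx (σ.symm jj)).1
        rw [Equiv.apply_symm_apply] at this
        exact lt_of_le_of_lt (by positivity) this
      refine ⟨aux_memS hA x hxpos hxup, fun jj => hxup jj, ?_⟩
      rintro β hβ ⟨k0, hk0eq, hk0gt⟩ hxβ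
      obtain ⟨jj, hjj⟩ := hβ.1.2 (v (η (σ k0)))
      set k1 : Fin n := σ.symm jj with hk1def
      have hjjk1 : jj = σ k1 := (Equiv.apply_symm_apply σ jj).symm
      rw [hjjk1] at hjj
      rcases lt_trichotomy k1 k0 with hlt | heq | hgt
      · have hβeq : β (σ k1) = (lcmOf a I (σ k1) : ℝ) := hk0eq k1 hlt
        have hgle : a (v (η (σ k0))) (σ k1) ≤ lcmOf a I (σ k1) := aux_le hv2 _ _
        have hgeq : a (v (η (σ k0))) (σ k1) = lcmOf a I (σ k1) := by
          have : (lcmOf a I (σ k1) : ℝ) ≤ (a (v (η (σ k0))) (σ k1) : ℝ) := hβeq ▸ hjj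
          exact le_antisymm hgle (by exact_mod_cast this)
        have hne : v (η (σ k0)) ≠ v (η (σ k1)) := by
          intro hc
          have := η.injective (hv1 hc)
          exact (ne_of_lt hlt) (σ.injective this).symm
        have hg'eq : a (v (η (σ k1))) (σ k1) = lcmOf a I (σ k1) := hη (σ k1)
        have hpos : 0 < a (v (η (σ k0))) (σ k1) := by rw [hgeq]; exact hB (σ k1)
        exact aux_gen hgen hA hB hne (fun jj => aux_le hv2 _ _) (fun jj => aux_le hv2 _ _)
          hpos (by rw [hgeq, hg'eq])
      · subst heq
        have : β (σ k1) ≤ (lcmOf a I (σ k1) : ℝ) := by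
          rw [← hη (σ k1)]; exact hjj
        exact absurd hk0gt (not_lt.mpr this)
      · have h1 : x (σ k1) ≤ β (σ k1) := hxβ (σ k1)
        have h2 : a (v (η (σ k0))) (σ k1) ≤ M k1 := by
          rw [hMdef]
          exact Finset.le_sup (f := fun j => a (v (η (σ j))) (σ k1)) (Finset.mem_Iio.mpr hgt)
        have h3 : (M k1 : ℝ) < x (σ k1) := (hx k1).1
        have : x (σ k1) ≤ (M k1 : ℝ) :=
          le_trans (le_trans h1 hjj) (by exact_mod_cast h2)
        exact absurd h3 (not_lt.mpr this)
  -- now the two conclusions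
  have hsets : {x : Fin n → ℝ | ∀ k : Fin n,
        ((((Finset.Iio k).sup fun j => a (v (η (σ j)))) (σ k) : ℝ) < x (σ k) ∧
          x (σ k) ≤ (((Finset.Iic k).sup fun j => a (v (η (σ j)))) (σ k) : ℝ))} =
      {x : Fin n → ℝ | ∀ k, (M k : ℝ) < x (σ k) ∧ x (σ k) ≤ (lcmOf a I (σ k) : ℝ)} := by
    ext x
    simp only [Set.mem_setOf_eq, happM, happC, hCa]
  have hMC : ∀ k, M k ≤ lcmOf a I (σ k) := hMle
  have hpi : {x : Fin n → ℝ | ∀ k, (M k : ℝ) < x (σ k) ∧ x (σ k) ≤ (lcmOf a I (σ k) : ℝ)} =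
      Set.pi Set.univ (fun jj => Set.Ioc ((M (σ.symm jj) : ℝ)) ((lcmOf a I jj : ℝ))) := by
    ext x
    simp only [Set.mem_pi, Set.mem_univ, Set.mem_Ioc, forall_true_left, Set.mem_setOf_eq]
    constructor
    · intro h jj
      have := h (σ.symm jj)
      rwa [Equiv.apply_symm_apply] at this
    · intro h k
      have := h (σ k)
      rwa [Equiv.symm_apply_apply] at this
  refine ⟨by rw [key, hsets], ?_⟩
  rw [key, hpi, volume_pi_pi]
  have hvol : ∀ jj, volume (Set.Ioc ((M (σ.symm jj) : ℝ)) ((lcmOf a I jj : ℝ))) =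
      ((lcmOf a I jj - M (σ.symm jj) : ℕ) : ENNReal) := by
    intro jj
    have hle : M (σ.symm jj) ≤ lcmOf a I jj := by
      have := hMle (σ.symm jj)
      rwa [Equiv.apply_symm_apply] at this
    rw [Real.volume_Ioc, ← Nat.cast_sub hle, ENNReal.ofReal_natCast]
  simp only [hvol]
  have hprod : ∏ jj : Fin n, ((lcmOf a I jj - M (σ.symm jj) : ℕ) : ENNReal) =
      ∏ k : Fin n, ((lcmOf a I (σ k) - M k : ℕ) : ENNReal) := by
    rw [← Equiv.prod_comp σ (fun jj => ((lcmOf a I jj - M (σ.symm jj) : ℕ) : ENNReal))]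
    exact Finset.prod_congr rfl fun k _ => by rw [Equiv.symm_apply_apply]
  rw [hprod, ← Nat.cast_prod]
  congr 1
  exact Finset.prod_congr rfl fun k _ => by rw [happM, happC, hCa]
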